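/- Let n ≥ 1 and let D : ℝ → M_n(ℂ) be a continuously differentiable path of Hermitian matrices which is a loop on [0,1], i.e. D(0) = D(1). Then for every continuous function g : ℝ → ℝ, ∫₀¹ tr(D′(t)·g(D(t))) dt = 0. (This is the finite-dimensional instance of the paper's Theorem stating that the one form V ↦ τ(V g(D)) is exact: the integral of the spectral-flow one-form around any loop vanishes.) -/

import Mathlib

attribute [local instance] Matrix.normedAddCommGroup Matrix.normedSpace

open Matrix

namespace SpectralFlowAux

abbrev MM (n : ℕ) := Matrix (Fin n) (Fin n) ℂ

lemma mul_isBoundedBilinear (n : ℕ) :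
    IsBoundedBilinearMap ℝ (fun p : MM n × MM n => p.1 * p.2) where
  add_left := fun a b c => add_mul a b c
  smul_left := fun c a b => by simp [Matrix.smul_mul]
  add_right := fun a b c => mul_add a b c
  smul_right := fun c a b => by simp [Matrix.mul_smul]
  bound := by
    refine ⟨n + 1, by positivity, fun A B => ?_⟩
    rw [Matrix.norm_le_iff (by positivity)]
    intro i j
    calc ‖(A * B) i j‖ = ‖∑ k, A i k * B k j‖ := by rw [Matrix.mul_apply]
    _ ≤ ∑ k : Fin n, ‖A i k * B k j‖ := norm_sum_le _ _
    _ ≤ ∑ k : Fin n, ‖A‖ * ‖B‖ := by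
        refine Finset.sum_le_sum fun k _ => ?_
        rw [norm_mul]
        exact mul_le_mul (norm_entry_le_entrywise_sup_norm A)
          (norm_entry_le_entrywise_sup_norm B) (norm_nonneg _) (norm_nonneg _)
    _ = n * (‖A‖ * ‖B‖) := by simp
    _ ≤ (n + 1) * ‖A‖ * ‖B‖ := by nlinarith [norm_nonneg A, norm_nonneg B]

lemma hasDerivAt_matrix_mul {n : ℕ} {f g : ℝ → MM n} {f' g' : MM n} {t : ℝ}
    (hf : HasDerivAt f f' t) (hg : HasDerivAt g g' t) :
    HasDerivAt (fun s => f s * g s) (f' * g t + f t * g') t := by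
  have h := ((mul_isBoundedBilinear n).hasFDerivAt (f t, g t)).comp_hasDerivAt t (hf.prodMk hg)
  have h2 : HasDerivAt (fun s => f s * g s)
      ((mul_isBoundedBilinear n).deriv (f t, g t) (f', g')) t := h
  convert h2 using 1
  simp [IsBoundedBilinearMap.deriv_apply]
  abel

noncomputable def traceCLM (n : ℕ) : MM n →L[ℝ] ℂ :=
  LinearMap.toContinuousLinearMap
    ((Matrix.traceLinearMap (Fin n) ℂ ℂ).restrictScalars ℝ)

lemma hasDerivAt_trace {n : ℕ} {f : ℝ → MM n} {f' : MM n} {t : ℝ}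
    (hf : HasDerivAt f f' t) :
    HasDerivAt (fun s => (f s).trace) f'.trace t :=
  (traceCLM n).hasFDerivAt.comp_hasDerivAt t hf

lemma hasDerivAt_matrix_pow {n : ℕ} {D : ℝ → MM n} {D' : ℝ → MM n}
    (hderiv : ∀ t, HasDerivAt D (D' t) t) (t : ℝ) (m : ℕ) :
    HasDerivAt (fun s => (D s) ^ m)
      (∑ i ∈ Finset.range m, (D t) ^ i * D' t * (D t) ^ (m - 1 - i)) t := by
  induction m with
  | zero =>
    simp only [pow_zero, Finset.range_zero, Finset.sum_empty]
    exact hasDerivAt_const t _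
  | succ m ih =>
    have h := hasDerivAt_matrix_mul ih (hderiv t)
    have : (fun s => D s ^ m * D s) = fun s => D s ^ (m + 1) := by
      ext s; rw [pow_succ]
    rw [this] at h
    convert h using 1
    rw [Finset.sum_range_succ, Finset.sum_mul]
    congr 1
    · refine Finset.sum_congr rfl fun i hi => ?_
      rw [Finset.mem_range] at hi
      have he : m - i = (m - 1 - i) + 1 := by omega
      simp [he, pow_succ, mul_assoc]
    · simp

lemma trace_pow_sum {n : ℕ} (A B : MM n) (m : ℕ) :
    (∑ i ∈ Finset.range m, A ^ i * B * A ^ (m - 1 - i)).trace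
      = (m : ℂ) * (B * A ^ (m - 1)).trace := by
  rw [Matrix.trace_sum]
  have : ∀ i ∈ Finset.range m,
      (A ^ i * B * A ^ (m - 1 - i)).trace = (B * A ^ (m - 1)).trace := by
    intro i hi
    rw [Finset.mem_range] at hi
    rw [Matrix.trace_mul_cycle, ← pow_add,
      show m - 1 - i + i = m - 1 from by omega, Matrix.trace_mul_comm]
  rw [Finset.sum_congr rfl this]
  simp [mul_comm]

lemma integral_trace_mul_pow_eq_zero {n : ℕ} {D D' : ℝ → MM n}
    (hderiv : ∀ t, HasDerivAt D (D' t) t)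
    (hD'cont : Continuous D') (hloop : D 0 = D 1) (k : ℕ) :
    (∫ t in (0:ℝ)..1, (D' t * (D t) ^ k).trace) = 0 := by
  have hDcont : Continuous D := continuous_iff_continuousAt.2 fun t => (hderiv t).continuousAt
  have hcont : Continuous fun t => (D' t * (D t) ^ k).trace :=
    (hD'cont.matrix_mul (hDcont.pow k)).matrix_trace
  have key : ∀ t ∈ Set.uIcc (0:ℝ) 1, HasDerivAt (fun s => ((D s) ^ (k+1)).trace)
      (((k:ℂ) + 1) * (D' t * (D t) ^ k).trace) t := by
    intro t _
    have h := hasDerivAt_trace (hasDerivAt_matrix_pow hderiv t (k+1))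
    rwa [trace_pow_sum, Nat.cast_add, Nat.cast_one, Nat.add_sub_cancel] at h
  have hint : IntervalIntegrable (fun t => ((k:ℂ) + 1) * (D' t * (D t) ^ k).trace)
      MeasureTheory.volume 0 1 := (continuous_const.mul hcont).intervalIntegrable 0 1
  have := intervalIntegral.integral_eq_sub_of_hasDerivAt key hint
  rw [hloop, sub_self] at this
  rw [intervalIntegral.integral_const_mul] at this
  exact (mul_eq_zero.mp this).resolve_left (Nat.cast_add_one_ne_zero k)

lemma integral_trace_mul_poly_eq_zero {n : ℕ} {D D' : ℝ → MM n}
    (hderiv : ∀ t, HasDerivAt D (D' t) t)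
    (hD'cont : Continuous D') (hloop : D 0 = D 1) (p : Polynomial ℝ) :
    (∫ t in (0:ℝ)..1, (D' t * Polynomial.aeval (D t) p).trace) = 0 := by
  have hDcont : Continuous D := continuous_iff_continuousAt.2 fun t => (hderiv t).continuousAt
  have hrw : ∀ t, (D' t * Polynomial.aeval (D t) p).trace
      = ∑ i ∈ Finset.range (p.natDegree + 1), p.coeff i • (D' t * (D t) ^ i).trace := by
    intro t
    rw [Polynomial.aeval_eq_sum_range, Finset.mul_sum, Matrix.trace_sum]
    refine Finset.sum_congr rfl fun i _ => ?_
    rw [mul_smul_comm, Matrix.trace_smul]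
  simp only [hrw]
  rw [intervalIntegral.integral_finset_sum]
  · refine Finset.sum_eq_zero fun i _ => ?_
    rw [intervalIntegral.integral_smul, integral_trace_mul_pow_eq_zero hderiv hD'cont hloop i,
      smul_zero]
  · intro i _
    exact (((hD'cont.matrix_mul (hDcont.pow i)).matrix_trace).const_smul (p.coeff i)).intervalIntegrable 0 1

lemma unitary_row_sq_sum {n : ℕ} (U : Matrix.unitaryGroup (Fin n) ℂ) (i : Fin n) :
    ∑ k, ‖(U : MM n) i k‖ ^ 2 = 1 := by
  have h : (U : MM n) * star (U : MM n) = 1 := Unitary.mul_star_self_of_mem U.2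
  have h2 := congrArg (fun A => A i i) h
  simp only [Matrix.mul_apply, Matrix.one_apply_eq] at h2
  have h3 : ∀ k, (U : MM n) i k * (star (U : MM n)) k i = ((‖(U : MM n) i k‖ ^ 2 : ℝ) : ℂ) := by
    intro k
    rw [Matrix.star_apply, Complex.star_def, Complex.mul_conj, Complex.normSq_eq_norm_sq]
  rw [Finset.sum_congr rfl fun k _ => h3 k, ← Complex.ofReal_sum] at h2
  exact_mod_cast h2

lemma cfc_entry_bound {n : ℕ} {A : MM n} (hA : A.IsHermitian) (f : ℝ → ℝ) {C : ℝ}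
    (hC : ∀ i, |f (hA.eigenvalues i)| ≤ C) (i j : Fin n) :
    ‖(cfc f A) i j‖ ≤ C := by
  rw [hA.cfc_eq, Matrix.IsHermitian.cfc, Unitary.conjStarAlgAut_apply]
  have hC0 : 0 ≤ C := le_trans (abs_nonneg _) (hC i)
  set U : MM n := (hA.eigenvectorUnitary : MM n) with hU
  have hentry : ((U * diagonal ((RCLike.ofReal : ℝ → ℂ) ∘ f ∘ hA.eigenvalues)) * star U) i j
      = ∑ k, U i k * ((f (hA.eigenvalues k) : ℝ) : ℂ) * (starRingEnd ℂ) (U j k) := by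
    rw [Matrix.mul_apply]
    refine Finset.sum_congr rfl fun k _ => ?_
    rw [Matrix.mul_diagonal, Matrix.star_apply, Complex.star_def]
    rfl
  rw [hentry]
  calc ‖∑ k, U i k * ((f (hA.eigenvalues k) : ℝ) : ℂ) * (starRingEnd ℂ) (U j k)‖
      ≤ ∑ k, ‖U i k * ((f (hA.eigenvalues k) : ℝ) : ℂ) * (starRingEnd ℂ) (U j k)‖ :=
        norm_sum_le _ _
    _ ≤ ∑ k, C * (‖U i k‖ * ‖U j k‖) := by
        refine Finset.sum_le_sum fun k _ => ?_
        rw [norm_mul, norm_mul, RCLike.norm_conj, Complex.norm_real]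
        calc ‖U i k‖ * ‖f (hA.eigenvalues k)‖ * ‖U j k‖
            ≤ ‖U i k‖ * C * ‖U j k‖ := by
              have := hC k
              rw [Real.norm_eq_abs]
              exact mul_le_mul_of_nonneg_right
                (mul_le_mul_of_nonneg_left this (norm_nonneg _)) (norm_nonneg _)
          _ = C * (‖U i k‖ * ‖U j k‖) := by ring
    _ = C * ∑ k, ‖U i k‖ * ‖U j k‖ := by rw [Finset.mul_sum]
    _ ≤ C * 1 := by
        refine mul_le_mul_of_nonneg_left ?_ hC0
        have hcs := Finset.sum_mul_sq_le_sq_mul_sq Finset.univ (fun k => ‖U i k‖) (fun k => ‖U j k‖)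
        have h1 : ∑ k, ‖U i k‖ ^ 2 = 1 := unitary_row_sq_sum hA.eigenvectorUnitary i
        have h2 : ∑ k, ‖U j k‖ ^ 2 = 1 := unitary_row_sq_sum hA.eigenvectorUnitary j
        rw [h1, h2, one_mul] at hcs
        have hnn : 0 ≤ ∑ k, ‖U i k‖ * ‖U j k‖ :=
          Finset.sum_nonneg fun k _ => mul_nonneg (norm_nonneg _) (norm_nonneg _)
        nlinarith
    _ = C := mul_one C

lemma eigenvalue_bound {n : ℕ} {A : MM n} (hA : A.IsHermitian) (i : Fin n) :
    |hA.eigenvalues i| ≤ n * ‖A‖ := by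
  set v : Fin n → ℂ := ⇑(hA.eigenvectorBasis i) with hvdef
  have hv : A *ᵥ v = (hA.eigenvalues i) • v := hA.mulVec_eigenvectorBasis i
  have hvnorm : ‖hA.eigenvectorBasis i‖ = 1 := hA.eigenvectorBasis.orthonormal.1 i
  have hvne : v ≠ 0 := by
    intro h0
    have : hA.eigenvectorBasis i = 0 := by
      ext k
      exact congrFun h0 k
    rw [this, norm_zero] at hvnorm
    exact one_ne_zero hvnorm.symm
  obtain ⟨i₀, -, hmax⟩ := Finset.exists_max_image Finset.univ (fun k => ‖v k‖)
    ⟨i, Finset.mem_univ i⟩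
  have hpos : 0 < ‖v i₀‖ := by
    rcases (norm_nonneg (v i₀)).lt_or_eq with h | h
    · exact h
    · exfalso
      apply hvne
      ext k
      have := hmax k (Finset.mem_univ k)
      rw [← h] at this
      simpa using le_antisymm this (norm_nonneg _)
  have h1 : ‖(A *ᵥ v) i₀‖ = |hA.eigenvalues i| * ‖v i₀‖ := by
    rw [hv, Pi.smul_apply, norm_smul, Real.norm_eq_abs]
  have h2 : ‖(A *ᵥ v) i₀‖ ≤ n * ‖A‖ * ‖v i₀‖ := by
    rw [Matrix.mulVec, dotProduct]
    calc ‖∑ k, A i₀ k * v k‖ ≤ ∑ k, ‖A i₀ k * v k‖ := norm_sum_le _ _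
      _ ≤ ∑ k : Fin n, ‖A‖ * ‖v i₀‖ := by
          refine Finset.sum_le_sum fun k _ => ?_
          rw [norm_mul]
          exact mul_le_mul (norm_entry_le_entrywise_sup_norm A)
            (hmax k (Finset.mem_univ k)) (norm_nonneg _) (norm_nonneg _)
      _ = n * ‖A‖ * ‖v i₀‖ := by simp; ring
  rw [h1] at h2
  exact le_of_mul_le_mul_right h2 hpos

end SpectralFlowAux

set_option maxHeartbeats 2000000 in
open SpectralFlowAux in
theorem integral_one_form_loop_vanishes_finite_dim
    (n : ℕ) (hn : 1 ≤ n)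
    (D : ℝ → Matrix (Fin n) (Fin n) ℂ)
    (hD : ∀ t, (D t).IsHermitian)
    (D' : ℝ → Matrix (Fin n) (Fin n) ℂ)
    (hderiv : ∀ t, HasDerivAt D (D' t) t)
    (hD'cont : Continuous D')
    (hloop : D 0 = D 1)
    (g : ℝ → ℝ) (hg : Continuous g) :
    (∫ t in (0:ℝ)..1, (D' t * cfc g (D t)).trace) = 0 := by
  classical
  set h : ℝ → ℂ := fun t => (D' t * cfc g (D t)).trace with hh
  by_cases hI : IntervalIntegrable h MeasureTheory.volume 0 1
  swap
  · exact intervalIntegral.integral_undef hI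
  have hDcont : Continuous D := continuous_iff_continuousAt.2 fun t => (hderiv t).continuousAt
  -- bounds on ‖D t‖ and ‖D' t‖ over [0,1]
  obtain ⟨Cd, hCd⟩ := (isCompact_Icc (a := (0:ℝ)) (b := 1)).exists_bound_of_continuousOn
    hDcont.continuousOn
  obtain ⟨B, hB⟩ := (isCompact_Icc (a := (0:ℝ)) (b := 1)).exists_bound_of_continuousOn
    hD'cont.continuousOn
  have hB0 : 0 ≤ B := le_trans (norm_nonneg _) (hB 0 (by norm_num))
  set R : ℝ := n * Cd with hR
  have heig : ∀ t ∈ Set.Icc (0:ℝ) 1, ∀ i, (hD t).eigenvalues i ∈ Set.Icc (-R) R := by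
    intro t ht i
    have h1 := eigenvalue_bound (hD t) i
    have h2 : (n : ℝ) * ‖D t‖ ≤ R := by
      rw [hR]
      exact mul_le_mul_of_nonneg_left (hCd t ht) (by positivity)
    have := le_trans h1 h2
    exact abs_le.mp this
  set C : ℝ := n ^ 2 * B with hC
  have hC0 : 0 ≤ C := by positivity
  -- key estimate: for every ε > 0, ‖∫ h‖ ≤ C * ε
  have hkey : ∀ ε : ℝ, 0 < ε → ‖∫ t in (0:ℝ)..1, h t‖ ≤ C * ε := by
    intro ε hε
    obtain ⟨p, hp⟩ := exists_polynomial_near_of_continuousOn (-R) R g hg.continuousOn ε hε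
    set q : ℝ → ℂ := fun t => (D' t * cfc (fun x => p.eval x) (D t)).trace with hq
    have hqeq : ∀ t, q t = (D' t * Polynomial.aeval (D t) p).trace := by
      intro t
      have hsa : IsSelfAdjoint (D t) := hD t
      have hcfc : cfc (fun x => Polynomial.eval x p) (D t) = Polynomial.aeval (D t) p :=
        cfc_polynomial p (D t) hsa
      rw [hq]
      simp only [hcfc]
    have hqcont : Continuous q := by
      have : Continuous fun t => Polynomial.aeval (D t) p := by
        rw [funext fun t => Polynomial.aeval_eq_sum_range (R := ℝ) (p := p) (D t)]
        exact continuous_finset_sum _ fun i _ => by exact (hDcont.pow i).const_smul (p.coeff i)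
      simp only [funext hqeq]
      exact (hD'cont.matrix_mul this).matrix_trace
    have hqint : IntervalIntegrable q MeasureTheory.volume 0 1 := hqcont.intervalIntegrable 0 1
    have hqzero : (∫ t in (0:ℝ)..1, q t) = 0 := by
      rw [intervalIntegral.integral_congr (g := fun t => (D' t * Polynomial.aeval (D t) p).trace)
        (fun t _ => hqeq t)]
      exact integral_trace_mul_poly_eq_zero hderiv hD'cont hloop p
    have hsplit : (∫ t in (0:ℝ)..1, h t) = ∫ t in (0:ℝ)..1, (h t - q t) := by
      rw [intervalIntegral.integral_sub hI hqint, hqzero, sub_zero]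
    rw [hsplit]
    have hbound : ∀ t ∈ Set.uIoc (0:ℝ) 1, ‖h t - q t‖ ≤ C * ε := by
      intro t ht
      rw [Set.uIoc_of_le (by norm_num : (0:ℝ) ≤ 1)] at ht
      have htIcc : t ∈ Set.Icc (0:ℝ) 1 := ⟨le_of_lt ht.1, ht.2⟩
      have hsa : IsSelfAdjoint (D t) := hD t
      have hsub : cfc g (D t) - cfc (fun x => p.eval x) (D t)
          = cfc (fun x => g x - p.eval x) (D t) := (cfc_sub g (fun x => p.eval x) (D t)).symm
      have hdiff : h t - q t = (D' t * cfc (fun x => g x - p.eval x) (D t)).trace := by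
        rw [hh, hq, ← hsub]
        simp [mul_sub]
      rw [hdiff]
      set E := cfc (fun x => g x - p.eval x) (D t) with hE
      have hEentry : ∀ i j, ‖E i j‖ ≤ ε := by
        intro i j
        refine cfc_entry_bound (hD t) _ (fun i => ?_) i j
        have hmem := heig t htIcc i
        have := hp _ hmem
        rw [abs_sub_comm] at this
        exact le_of_lt this
      calc ‖(D' t * E).trace‖ = ‖∑ i, (D' t * E) i i‖ := by rw [Matrix.trace]; rfl
        _ ≤ ∑ i, ‖(D' t * E) i i‖ := norm_sum_le _ _
        _ ≤ ∑ _i : Fin n, (n * (B * ε)) := by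
            refine Finset.sum_le_sum fun i _ => ?_
            rw [Matrix.mul_apply]
            calc ‖∑ k, D' t i k * E k i‖ ≤ ∑ k, ‖D' t i k * E k i‖ := norm_sum_le _ _
              _ ≤ ∑ _k : Fin n, B * ε := by
                  refine Finset.sum_le_sum fun k _ => ?_
                  rw [norm_mul]
                  have hd : ‖D' t i k‖ ≤ B :=
                    le_trans (norm_entry_le_entrywise_sup_norm (D' t)) (hB t htIcc)
                  exact mul_le_mul hd (hEentry k i) (norm_nonneg _) hB0
              _ = n * (B * ε) := by simp
        _ = C * ε := by
            rw [Finset.sum_const, Finset.card_univ, Fintype.card_fin, nsmul_eq_mul, hC]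
            ring
    have := intervalIntegral.norm_integral_le_of_norm_le_const hbound
    simpa using this
  -- conclude
  have hle : ∀ ε : ℝ, 0 < ε → ‖∫ t in (0:ℝ)..1, h t‖ ≤ ε := by
    intro ε hε
    have h1 := hkey (ε / (C + 1)) (by positivity)
    have h2 : C * (ε / (C + 1)) ≤ ε := by
      have hd : 0 ≤ ε / (C + 1) := by positivity
      calc C * (ε / (C + 1)) ≤ (C + 1) * (ε / (C + 1)) :=
            mul_le_mul_of_nonneg_right (by linarith) hd
        _ = ε := by field_simp
    linarith
  by_contra hne
  have hpos : 0 < ‖∫ t in (0:ℝ)..1, h t‖ := norm_pos_iff.mpr hne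
  linarith [hle (‖∫ t in (0:ℝ)..1, h t‖ / 2) (by positivity)]
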